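/- If m is a greatest monomial of a polynomial f in p variables over ℝ, then for any translation vector P ∈ ℝ^p, m is also a greatest monomial of T_{−P}(f). More generally, the set of greatest monomials of f equals the set of greatest monomials of T_{−P}(f). -/

import Mathlib

open MvPolynomial

/-- Translation of a polynomial: substitution `X i ↦ X i + C (P i)`. -/
noncomputable def T {p : ℕ} (P : Fin p → ℝ) :
    MvPolynomial (Fin p) ℝ →ₐ[ℝ] MvPolynomial (Fin p) ℝ :=
  aeval (fun i => X i + C (P i))

/-- `d` is a greatest monomial of `f`: its coefficient is nonzero and no other
monomial of `f` with nonzero coefficient is componentwise ≥ `d`. -/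
def GreatestMonomial {p : ℕ} (f : MvPolynomial (Fin p) ℝ) (d : Fin p →₀ ℕ) : Prop :=
  coeff d f ≠ 0 ∧ ∀ e : Fin p →₀ ℕ, e ≠ d → d ≤ e → coeff e f = 0

namespace GMaux

variable {p : ℕ}

/-- Bound + top-coefficient behaviour of multiplication. -/
lemma bnd_mul {g h : MvPolynomial (Fin p) ℝ} {u v : Fin p →₀ ℕ}
    (hg : ∀ e, coeff e g ≠ 0 → e ≤ u) (hh : ∀ e, coeff e h ≠ 0 → e ≤ v) :
    (∀ e, coeff e (g * h) ≠ 0 → e ≤ u + v) ∧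
      coeff (u + v) (g * h) = coeff u g * coeff v h := by
  constructor
  · intro e he
    rw [coeff_mul] at he
    obtain ⟨q, hq, hne⟩ := Finset.exists_ne_zero_of_sum_ne_zero he
    rw [Finset.HasAntidiagonal.mem_antidiagonal] at hq
    have h1 : q.1 ≤ u := hg _ (left_ne_zero_of_mul hne)
    have h2 : q.2 ≤ v := hh _ (right_ne_zero_of_mul hne)
    rw [← hq]
    exact add_le_add h1 h2
  · rw [coeff_mul]
    apply Finset.sum_eq_single (u, v)
    · intro b hb hbne
      rw [Finset.HasAntidiagonal.mem_antidiagonal] at hb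
      by_cases h1 : coeff b.1 g = 0
      · rw [h1, zero_mul]
      by_cases h2 : coeff b.2 h = 0
      · rw [h2, mul_zero]
      exfalso
      have hb1 : b.1 ≤ u := hg _ h1
      have hb2 : b.2 ≤ v := hh _ h2
      apply hbne
      have key : ∀ i, b.1 i = u i ∧ b.2 i = v i := by
        intro i
        have h0 : b.1 i + b.2 i = u i + v i := by
          have := Finsupp.ext_iff.mp hb i
          simpa [Finsupp.add_apply] using this
        have k1 := Finsupp.le_def.mp hb1 i
        have k2 := Finsupp.le_def.mp hb2 i
        omega
      exact Prod.ext (Finsupp.ext fun i => (key i).1) (Finsupp.ext fun i => (key i).2)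
    · intro hnot
      exfalso; exact hnot (Finset.HasAntidiagonal.mem_antidiagonal.mpr rfl)

lemma bnd_pow (i : Fin p) (a : ℝ) (n : ℕ) :
    (∀ e, coeff e ((X i + C a) ^ n : MvPolynomial (Fin p) ℝ) ≠ 0 →
        e ≤ Finsupp.single i n) ∧
      coeff (Finsupp.single i n) ((X i + C a) ^ n : MvPolynomial (Fin p) ℝ) = 1 := by
  induction n with
  | zero =>
      constructor
      · intro e he
        rw [pow_zero, coeff_one] at he
        simp only [ne_eq, ite_eq_right_iff, not_forall] at he
        rw [he.1.symm] at *
        simp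
      · simp [coeff_one]
  | succ n ih =>
      have hbase : ∀ e, coeff e ((X i + C a : MvPolynomial (Fin p) ℝ)) ≠ 0 →
          e ≤ Finsupp.single i 1 := by
        intro e he
        rw [coeff_add, coeff_X', coeff_C] at he
        by_cases h1 : Finsupp.single i 1 = e
        · rw [← h1]
        by_cases h2 : (0 : Fin p →₀ ℕ) = e
        · rw [← h2]; exact zero_le
        simp [h1, h2] at he
      have hmul := bnd_mul ih.1 hbase
      have hsing : Finsupp.single i n + Finsupp.single i 1 = Finsupp.single i (n + 1) := by
        rw [← Finsupp.single_add]
      constructor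
      · intro e he
        rw [pow_succ] at he
        rw [← hsing]
        exact hmul.1 e he
      · rw [pow_succ, ← hsing, hmul.2, ih.2, one_mul]
        have : coeff (Finsupp.single i 1) (X i + C a : MvPolynomial (Fin p) ℝ) = 1 := by
          rw [coeff_add, coeff_X', coeff_C, if_pos rfl,
            if_neg (fun h0 => one_ne_zero (Finsupp.single_eq_zero.mp h0.symm)), add_zero]
        rw [this]

lemma bnd_prod (s : Finset (Fin p)) (d : Fin p →₀ ℕ) (P : Fin p → ℝ) :
    (∀ e, coeff e (∏ i ∈ s, (X i + C (P i)) ^ (d i) : MvPolynomial (Fin p) ℝ) ≠ 0 →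
        e ≤ ∑ i ∈ s, Finsupp.single i (d i)) ∧
      coeff (∑ i ∈ s, Finsupp.single i (d i))
        (∏ i ∈ s, (X i + C (P i)) ^ (d i) : MvPolynomial (Fin p) ℝ) = 1 := by
  induction s using Finset.cons_induction with
  | empty =>
      constructor
      · intro e he
        rw [Finset.prod_empty, coeff_one] at he
        simp only [ne_eq, ite_eq_right_iff, not_forall] at he
        rw [he.1.symm]
        simp
      · simp [coeff_one]
  | cons j s hj ih =>
      rw [Finset.prod_cons, Finset.sum_cons]
      have hmul := bnd_mul (bnd_pow j (P j) (d j)).1 ih.1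
      exact ⟨hmul.1, by rw [hmul.2, (bnd_pow j (P j) (d j)).2, ih.2, one_mul]⟩

lemma T_apply (P : Fin p → ℝ) (f : MvPolynomial (Fin p) ℝ) :
    T P f = ∑ d ∈ f.support,
      C (coeff d f) * ∏ i, (X i + C (P i)) ^ (d i) := by
  conv_lhs => rw [f.as_sum]
  rw [map_sum]
  apply Finset.sum_congr rfl
  intro d _
  simp only [T, aeval_monomial, algebraMap_eq]
  congr 1
  exact Finsupp.prod_fintype _ _ fun i => pow_zero _

/-- Key lemma: above a greatest monomial, translation does not change coefficients. -/
lemma coeff_T_eq (P : Fin p → ℝ) (f : MvPolynomial (Fin p) ℝ) (d : Fin p →₀ ℕ)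
    (h : ∀ e : Fin p →₀ ℕ, e ≠ d → d ≤ e → coeff e f = 0) :
    ∀ e, d ≤ e → coeff e (T P f) = coeff e f := by
  intro e hde
  rw [T_apply, MvPolynomial.coeff_sum]
  simp only [coeff_C_mul]
  by_cases hed : e = d
  · subst hed
    have htop : coeff e (∏ i, (X i + C (P i)) ^ (e i) : MvPolynomial (Fin p) ℝ) = 1 := by
      have h2 := (bnd_prod Finset.univ e P).2
      rwa [Finsupp.univ_sum_single e] at h2
    rw [show coeff e f = coeff e f *
        coeff e (∏ i, (X i + C (P i)) ^ (e i) : MvPolynomial (Fin p) ℝ) by rw [htop, mul_one]]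
    apply Finset.sum_eq_single e
    · intro d' hd' hne
      have hcoeff : ¬ e ≤ d' := fun hle => (mem_support_iff.mp hd') (h d' hne hle)
      have : coeff e (∏ i, (X i + C (P i)) ^ (d' i) : MvPolynomial (Fin p) ℝ) = 0 := by
        by_contra hc
        exact hcoeff (by simpa [Finsupp.univ_sum_single d'] using (bnd_prod Finset.univ d' P).1 e hc)
      rw [this, mul_zero]
    · intro hnot
      rw [notMem_support_iff.mp hnot, zero_mul]
  · rw [h e hed hde]
    apply Finset.sum_eq_zero
    intro d' hd'
    have hled : ¬ e ≤ d' := by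
      by_cases hdd : d' = d
      · subst hdd
        intro hle
        exact hed (le_antisymm hle hde)
      · intro hle
        exact (mem_support_iff.mp hd') (h d' hdd (le_trans hde hle))
    have : coeff e (∏ i, (X i + C (P i)) ^ (d' i) : MvPolynomial (Fin p) ℝ) = 0 := by
      by_contra hc
      exact hled (by simpa [Finsupp.univ_sum_single d'] using (bnd_prod Finset.univ d' P).1 e hc)
    rw [this, mul_zero]

lemma T_T (P : Fin p → ℝ) (f : MvPolynomial (Fin p) ℝ) :
    T P (T (-P) f) = f := by
  have hcomp : (T P).comp (T (-P)) = AlgHom.id ℝ (MvPolynomial (Fin p) ℝ) := by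
    apply MvPolynomial.algHom_ext
    intro i
    simp only [AlgHom.comp_apply, T, aeval_X, map_add, AlgHom.id_apply, aeval_C,
      algebraMap_eq, Pi.neg_apply, map_neg]
    ring
  have := DFunLike.congr_fun hcomp f
  simpa using this

end GMaux

/-- The set of greatest monomials of `f` equals the set of greatest monomials of
`T (-P) f`; in particular any greatest monomial of `f` is a greatest monomial of
the translated polynomial. -/
theorem greatestMonomial_translate {p : ℕ} (f : MvPolynomial (Fin p) ℝ)
    (P : Fin p → ℝ) :
    ∀ d : Fin p →₀ ℕ, GreatestMonomial f d ↔ GreatestMonomial (T (-P) f) d := by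
  have main : ∀ (Q : Fin p → ℝ) (g : MvPolynomial (Fin p) ℝ) (d : Fin p →₀ ℕ),
      GreatestMonomial g d → GreatestMonomial (T Q g) d := by
    intro Q g d ⟨h1, h2⟩
    constructor
    · rw [GMaux.coeff_T_eq Q g d h2 d le_rfl]; exact h1
    · intro e hne hle
      rw [GMaux.coeff_T_eq Q g d h2 e hle]
      exact h2 e hne hle
  intro d
  constructor
  · exact main (-P) f d
  · intro hg
    have := main P (T (-P) f) d hg
    rwa [GMaux.T_T] at this
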